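/- Let k ≥ 1, ℓ, and r be natural numbers with ℓ ≥ k + 1, and for each natural number j ≥ ℓ define t(j) = ( ∏_{i=ℓ}^{j−1} (1 − k/i) ) · ∑_{r'=0}^{r−1} ∑_{M ⊆ {ℓ, …, j−1}, |M| = r'} ∏_{i ∈ M} (k−1)/i, where the subset sum ranges over all subsets M of the integer interval {ℓ, …, j−1} of cardinality r', empty products equal 1, and all arithmetic is over the real numbers. Then the sequence t(j) is non-increasing in j, i.e. t(j+1) ≤ t(j) for all j ≥ ℓ. -/

import Mathlib

open Finset

private lemma esymm_insert_aux (x : ℕ → ℝ) {A : Finset ℕ} {j : ℕ} (hj : j ∉ A) (n : ℕ) :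
    ∑ M ∈ (insert j A).powersetCard (n + 1), ∏ i ∈ M, x i
      = (∑ M ∈ A.powersetCard (n + 1), ∏ i ∈ M, x i)
        + x j * ∑ M ∈ A.powersetCard n, ∏ i ∈ M, x i := by
  rw [Finset.powersetCard_succ_insert hj, Finset.sum_union, Finset.sum_image, Finset.mul_sum]
  · congr 1
    refine Finset.sum_congr rfl fun M hM => ?_
    rw [Finset.mem_powersetCard] at hM
    rw [Finset.prod_insert (fun h => hj (hM.1 h))]
  · intro a ha b hb hab
    rw [Finset.mem_coe, Finset.mem_powersetCard] at ha hb
    have hja : j ∉ a := fun h => hj (ha.1 h)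
    have hjb : j ∉ b := fun h => hj (hb.1 h)
    rw [← Finset.erase_insert hja, hab, Finset.erase_insert hjb]
  · rw [Finset.disjoint_left]
    intro M hM hM'
    rw [Finset.mem_powersetCard] at hM
    obtain ⟨N, hN, rfl⟩ := Finset.mem_image.1 hM'
    exact hj (hM.1 (Finset.mem_insert_self j N))

/-- Claim 2 of the paper: the coefficients `t j` are non-increasing in `j`. -/
theorem coefficients_nonincreasing (k ℓ r : ℕ) (hk : 1 ≤ k) (hl : k + 1 ≤ ℓ)
    (t : ℕ → ℝ)
    (ht : ∀ j, t j = (∏ i ∈ Finset.Ico ℓ j, (1 - (k : ℝ) / i)) *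
      ∑ r' ∈ Finset.range r,
        ∑ M ∈ (Finset.Ico ℓ j).powersetCard r',
          ∏ i ∈ M, ((k : ℝ) - 1) / i) :
    ∀ j, ℓ ≤ j → t (j + 1) ≤ t j := by
  intro j hj
  set x : ℕ → ℝ := fun i => ((k : ℝ) - 1) / i with hxdef
  have hxnn : ∀ i, 0 ≤ x i := fun i =>
    div_nonneg (sub_nonneg.2 (by exact_mod_cast hk)) (Nat.cast_nonneg i)
  set A : Finset ℕ := Finset.Ico ℓ j with hA
  have hjA : j ∉ A := by simp [hA]
  have hins : Finset.Ico ℓ (j + 1) = insert j A := Nat.Ico_succ_right_eq_insert_Ico hj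
  -- elementary symmetric sums
  set e : ℕ → ℝ := fun n => ∑ M ∈ A.powersetCard n, ∏ i ∈ M, x i with he
  have henn : ∀ n, 0 ≤ e n := fun n =>
    Finset.sum_nonneg fun M _ => Finset.prod_nonneg fun i _ => hxnn i
  set S : ℝ := ∑ r' ∈ Finset.range r, e r' with hS
  have hSnn : 0 ≤ S := Finset.sum_nonneg fun n _ => henn n
  -- product nonnegativity
  have hfac : ∀ i ∈ Finset.Ico ℓ (j + 1), (0:ℝ) ≤ 1 - (k : ℝ) / i := by
    intro i hi
    rw [Finset.mem_Ico] at hi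
    have hik : k < i := by omega
    have hipos : (0:ℝ) < i := by exact_mod_cast (show 0 < i by omega)
    have : (k : ℝ) / i ≤ 1 := by
      rw [div_le_one hipos]; exact_mod_cast hik.le
    linarith
  have hPnn : (0:ℝ) ≤ ∏ i ∈ A, (1 - (k : ℝ) / i) :=
    Finset.prod_nonneg fun i hi => hfac i (by rw [hA] at hi; rw [Finset.mem_Ico] at hi ⊢; omega)
  have hjnn : (0:ℝ) ≤ 1 - (k : ℝ) / j := hfac j (by rw [Finset.mem_Ico]; omega)
  -- new sum bound
  have hsum : ∑ r' ∈ Finset.range r,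
      ∑ M ∈ (insert j A).powersetCard r', ∏ i ∈ M, x i ≤ (1 + x j) * S := by
    rcases Nat.eq_zero_or_pos r with rfl | hr
    · simp [hS]
    obtain ⟨m, rfl⟩ := Nat.exists_eq_succ_of_ne_zero hr.ne'
    rw [Finset.sum_range_succ']
    have h0 : ∑ M ∈ (insert j A).powersetCard 0, ∏ i ∈ M, x i = e 0 := by
      simp [he]
    rw [h0]
    have hstep : ∀ n ∈ Finset.range m,
        ∑ M ∈ (insert j A).powersetCard (n + 1), ∏ i ∈ M, x i
          = e (n + 1) + x j * e n := fun n _ => esymm_insert_aux x hjA n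
    rw [Finset.sum_congr rfl hstep, Finset.sum_add_distrib]
    have h1 : ∑ n ∈ Finset.range m, e (n + 1) + e 0 = S := by
      rw [hS, Finset.sum_range_succ']
    have h2 : ∑ n ∈ Finset.range m, x j * e n ≤ x j * S := by
      rw [← Finset.mul_sum]
      apply mul_le_mul_of_nonneg_left _ (hxnn j)
      rw [hS, Finset.sum_range_succ]
      exact le_add_of_nonneg_right (henn m)
    calc ∑ n ∈ Finset.range m, e (n + 1) + ∑ n ∈ Finset.range m, x j * e n + e 0
        ≤ S + x j * S := by linarith
      _ = (1 + x j) * S := by ring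
  -- key scalar inequality
  have hjpos : (0:ℝ) < j := by
    have : 0 < j := by omega
    exact_mod_cast this
  have hscalar : (1 - (k : ℝ) / j) * (1 + x j) ≤ 1 := by
    have hxj : x j = ((k : ℝ) - 1) / j := rfl
    have hk1 : (1:ℝ) ≤ k := by exact_mod_cast hk
    have h1 : (1 - (k:ℝ)/j) * (1 + ((k:ℝ)-1)/j)
        = 1 - 1/(j:ℝ) - ((k:ℝ)*((k:ℝ)-1))/(j:ℝ)^2 := by
      field_simp
      ring
    rw [hxj, h1]
    have h2 : (0:ℝ) ≤ 1/(j:ℝ) := by positivity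
    have h3 : (0:ℝ) ≤ ((k:ℝ)*((k:ℝ)-1))/(j:ℝ)^2 :=
      div_nonneg (mul_nonneg (by positivity) (by linarith)) (by positivity)
    linarith
  -- assemble
  rw [ht (j + 1), ht j, hins, Finset.prod_insert hjA]
  calc (1 - (k : ℝ) / j) * (∏ i ∈ A, (1 - (k : ℝ) / i)) *
        ∑ r' ∈ Finset.range r, ∑ M ∈ (insert j A).powersetCard r', ∏ i ∈ M, x i
      ≤ (1 - (k : ℝ) / j) * (∏ i ∈ A, (1 - (k : ℝ) / i)) * ((1 + x j) * S) := by
        exact mul_le_mul_of_nonneg_left hsum (by positivity)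
    _ = ((1 - (k : ℝ) / j) * (1 + x j)) * ((∏ i ∈ A, (1 - (k : ℝ) / i)) * S) := by ring
    _ ≤ 1 * ((∏ i ∈ A, (1 - (k : ℝ) / i)) * S) := by
        exact mul_le_mul_of_nonneg_right hscalar (by positivity)
    _ = (∏ i ∈ A, (1 - (k : ℝ) / i)) * S := by ring
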